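/- arXiv:0911.3952 — 3 statements merged into one kernel-verified Lean document; each statement's English description precedes it below -/
import Mathlib

section
/- Let $u^*:\mathbf{R}^n \to \mathbf{R}\cup\{+\infty\}$ be a convex function with $Z^* = \{u^* \le 0\}$ satisfying $B_1 \subset Z^* \subset \overline{B_n}$ and $u^* = 0$ on $\partial Z^*$. Then for all $t \in (0,1)$, the Lebesgue measure of the image of $tZ^*$ under the subdifferential map satisfies $\mathcal{L}^n(\partial u^*(tZ^*)) \le \frac{C(n)}{(1-t)^n} \frac{|\inf_{Z^*} u^*|^n}{\mathcal{L}^n(Z^*)}$ for some constant $C(n)$ depending only on the dimension $n$. -/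
open MeasureTheory Set Pointwise

/-- Upper bound on Dirichlet solutions to Monge–Ampère inequalities. -/
theorem stmt_1 (n : ℕ) :
    ∃ C : ℝ, 0 < C ∧
    ∀ (u : EuclideanSpace ℝ (Fin n) → ℝ), ConvexOn ℝ Set.univ u →
    ∀ Z : Set (EuclideanSpace ℝ (Fin n)), Z = {x | u x ≤ 0} →
      Metric.ball 0 1 ⊆ Z → Z ⊆ Metric.closedBall 0 n →
      (∀ x ∈ frontier Z, u x = 0) →
      ∀ t ∈ Set.Ioo (0 : ℝ) 1,
      volume (⋃ q ∈ t • Z,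
          {p : EuclideanSpace ℝ (Fin n) | ∀ x, u q + (inner ℝ p (x - q) : ℝ) ≤ u x})
        ≤ ENNReal.ofReal (C / (1 - t) ^ n * |sInf (u '' Z)| ^ n / (volume Z).toReal) := by
  classical
  have hvb_pos : 0 < volume (Metric.ball (0 : EuclideanSpace ℝ (Fin n)) 1) :=
    Metric.measure_ball_pos _ _ one_pos
  have hvb_lt : volume (Metric.ball (0 : EuclideanSpace ℝ (Fin n)) 1) < ⊤ :=
    lt_of_le_of_lt (measure_mono Metric.ball_subset_closedBall) measure_closedBall_lt_top
  set vbR := (volume (Metric.ball (0 : EuclideanSpace ℝ (Fin n)) 1)).toReal with hvbR_def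
  have hvbR_pos : 0 < vbR := ENNReal.toReal_pos hvb_pos.ne' hvb_lt.ne
  refine ⟨vbR ^ 2 * (n : ℝ) ^ n + 1, by positivity, ?_⟩
  intro u hu Z hZ hball hcb hfr t ht
  have ht1 : (0 : ℝ) < 1 - t := by linarith [ht.2]
  have hucont : Continuous u := by
    exact continuousOn_univ.mp (ConvexOn.continuousOn isOpen_univ hu)
  have hZclosed : IsClosed Z := by
    rw [hZ]
    exact isClosed_le hucont continuous_const
  have hZcompact : IsCompact Z :=
    (isCompact_closedBall _ _).of_isClosed_subset hZclosed hcb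
  have h0Z : (0 : EuclideanSpace ℝ (Fin n)) ∈ Z := hball (Metric.mem_ball_self one_pos)
  have hbdd : BddBelow (u '' Z) := hZcompact.bddBelow_image hucont.continuousOn
  have hS : sInf (u '' Z) ≤ 0 := by
    refine le_trans (csInf_le hbdd ⟨0, h0Z, rfl⟩) ?_
    have : (0 : EuclideanSpace ℝ (Fin n)) ∈ {x | u x ≤ 0} := hZ ▸ h0Z
    exact this
  set M := -sInf (u '' Z) with hM_def
  have hM : 0 ≤ M := by simp [hM_def]; exact hS
  have hZconv : Convex ℝ Z := by
    have := hu.convex_le 0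
    rw [Set.sep_univ] at this
    rw [hZ]
    exact this
  have hcb1 : Metric.closedBall (0 : EuclideanSpace ℝ (Fin n)) 1 ⊆ Z := by
    rw [← closure_ball (0 : EuclideanSpace ℝ (Fin n)) one_ne_zero]
    exact hZclosed.closure_subset_iff.mpr hball
  -- Every subgradient at a point of t • Z has norm at most M / (1 - t)
  have hsub : (⋃ q ∈ t • Z,
      {p : EuclideanSpace ℝ (Fin n) | ∀ x, u q + (inner ℝ p (x - q) : ℝ) ≤ u x})
      ⊆ Metric.closedBall 0 (M / (1 - t)) := by
    intro p hp
    simp only [Set.mem_iUnion] at hp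
    obtain ⟨q, hq, hp⟩ := hp
    obtain ⟨z, hz, rfl⟩ := hq
    rw [Metric.mem_closedBall, dist_zero_right]
    have hqZ : t • z ∈ Z := by
      have := hZconv hz h0Z ht.1.le ht1.le (by ring)
      simpa using this
    have huq : -M ≤ u (t • z) := by
      have := csInf_le hbdd ⟨t • z, hqZ, rfl⟩
      simp only [hM_def, neg_neg]
      exact this
    have key : ∀ e : EuclideanSpace ℝ (Fin n), ‖e‖ ≤ 1 →
        (1 - t) * (inner ℝ p e : ℝ) ≤ M := by
      intro e he
      have heZ : e ∈ Z := hcb1 (by simpa [Metric.mem_closedBall, dist_zero_right] using he)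
      have hxZ : t • z + (1 - t) • e ∈ Z := hZconv hz heZ ht.1.le ht1.le (by ring)
      have hux : u (t • z + (1 - t) • e) ≤ 0 := by rw [hZ] at hxZ; exact hxZ
      have h1 := hp (t • z + (1 - t) • e)
      have h2 : (inner ℝ p ((t • z + (1 - t) • e) - t • z) : ℝ)
          = (1 - t) * (inner ℝ p e : ℝ) := by
        rw [add_sub_cancel_left, real_inner_smul_right]
      rw [h2] at h1
      linarith
    rcases eq_or_ne p 0 with rfl | hp0
    · simpa using div_nonneg hM ht1.le
    have hnorm : (1 - t) * ‖p‖ ≤ M := by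
      have he : ‖(‖p‖⁻¹ • p)‖ ≤ 1 := by
        rw [norm_smul, norm_inv, norm_norm, inv_mul_cancel₀ (norm_ne_zero_iff.mpr hp0)]
      have := key (‖p‖⁻¹ • p) he
      rw [real_inner_smul_right, real_inner_self_eq_norm_mul_norm] at this
      calc (1 - t) * ‖p‖ = (1 - t) * (‖p‖⁻¹ * (‖p‖ * ‖p‖)) := by
            field_simp
        _ ≤ M := this
    rw [le_div_iff₀ ht1]
    linarith
  have hfinrank : Module.finrank ℝ (EuclideanSpace ℝ (Fin n)) = n := by
    simp [finrank_euclideanSpace]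
  -- volume of Z: positivity and upper bound
  have hVpos : 0 < (volume Z).toReal := by
    refine ENNReal.toReal_pos ?_ ?_
    · exact (lt_of_lt_of_le hvb_pos (measure_mono hball)).ne'
    · exact (lt_of_le_of_lt (measure_mono hcb) measure_closedBall_lt_top).ne
  have hVle : (volume Z).toReal ≤ (n : ℝ) ^ n * vbR := by
    have h1 : volume Z ≤ ENNReal.ofReal ((n : ℝ) ^ n)
        * volume (Metric.ball (0 : EuclideanSpace ℝ (Fin n)) 1) := by
      calc volume Z ≤ volume (Metric.closedBall (0 : EuclideanSpace ℝ (Fin n)) n) :=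
            measure_mono hcb
        _ = ENNReal.ofReal ((n : ℝ) ^ Module.finrank ℝ (EuclideanSpace ℝ (Fin n)))
            * volume (Metric.ball (0 : EuclideanSpace ℝ (Fin n)) 1) :=
            Measure.addHaar_closedBall volume 0 (Nat.cast_nonneg n)
        _ = _ := by rw [hfinrank]
    have h2 := ENNReal.toReal_mono ?_ h1
    · rw [ENNReal.toReal_mul, ENNReal.toReal_ofReal (by positivity)] at h2
      exact h2
    · exact (ENNReal.mul_lt_top ENNReal.ofReal_lt_top hvb_lt).ne
  calc volume (⋃ q ∈ t • Z,
      {p : EuclideanSpace ℝ (Fin n) | ∀ x, u q + (inner ℝ p (x - q) : ℝ) ≤ u x})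
      ≤ volume (Metric.closedBall (0 : EuclideanSpace ℝ (Fin n)) (M / (1 - t))) :=
        measure_mono hsub
    _ = ENNReal.ofReal ((M / (1 - t)) ^ n)
        * volume (Metric.ball (0 : EuclideanSpace ℝ (Fin n)) 1) := by
        rw [Measure.addHaar_closedBall volume 0 (div_nonneg hM ht1.le), hfinrank]
    _ = ENNReal.ofReal ((M / (1 - t)) ^ n * vbR) := by
        rw [ENNReal.ofReal_mul (by positivity), ENNReal.ofReal_toReal hvb_lt.ne]
    _ ≤ ENNReal.ofReal ((vbR ^ 2 * (n : ℝ) ^ n + 1) / (1 - t) ^ n * |sInf (u '' Z)| ^ n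
        / (volume Z).toReal) := by
        apply ENNReal.ofReal_le_ofReal
        rw [abs_of_nonpos hS, ← hM_def]
        rw [div_pow, div_mul_eq_mul_div, div_mul_eq_mul_div, div_div,
          div_le_div_iff₀ (by positivity) (by positivity)]
        have h1 : vbR * (volume Z).toReal ≤ vbR ^ 2 * (n : ℝ) ^ n + 1 := by
          nlinarith [mul_le_mul_of_nonneg_left hVle hvbR_pos.le]
        have h2 : 0 ≤ M ^ n := pow_nonneg hM n
        have h3 : 0 ≤ (1 - t) ^ n := pow_nonneg ht1.le n
        nlinarith [mul_le_mul_of_nonneg_right (mul_le_mul_of_nonneg_left h1 h2) h3]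
end

section
/- Let $Z$ be a convex set in $\mathbf{R}^n = \mathbf{R}^{n'} \times \mathbf{R}^{n''}$, let $\pi''$ denote projection onto the second factor, and let $Z' = (\pi'')^{-1}(\bar x'') \cap Z$ be the slice of $Z$ over some point $\bar x'' \in \pi''(Z)$. Then there is a constant $C(n)$ depending only on $n = n' + n''$ such that $C(n)\,\mathcal{L}^n(Z) \ge \mathcal{H}^{n'}(Z')\,\mathcal{H}^{n''}(\pi''(Z))$. -/
open MeasureTheory Set
open scoped Pointwise ENNReal NNReal

/-- Hausdorff measure on Euclidean space is bounded by a constant times volume. -/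
lemma aux_haus_le_vol (n : ℕ) : ∃ c : ℝ≥0, ∀ s : Set (EuclideanSpace ℝ (Fin n)),
    μH[(n : ℝ)] s ≤ (c : ℝ≥0∞) * volume s := by
  set K : ℝ≥0 := (Fintype.card (Fin n) : ℝ≥0) ^ (1 / (2 : ℝ≥0∞)).toReal with hK
  have hanti := PiLp.antilipschitzWith_ofLp 2 (fun _ : Fin n => ℝ)
  have hlip : LipschitzWith K (WithLp.equiv 2 (Fin n → ℝ)).symm := by
    intro x y
    simpa only [WithLp.equiv_symm_apply, WithLp.ofLp_toLp] using hanti ((WithLp.equiv 2 (Fin n → ℝ)).symm x)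
      ((WithLp.equiv 2 (Fin n → ℝ)).symm y)
  refine ⟨K ^ n, fun s => ?_⟩
  have himg : (WithLp.equiv 2 (Fin n → ℝ)).symm '' ((WithLp.equiv 2 (Fin n → ℝ)) '' s) = s := by
    simp [Set.image_image]
  have h1 : μH[(n : ℝ)] s
      ≤ (K : ℝ≥0∞) ^ (n : ℝ) * μH[(n : ℝ)] ((WithLp.equiv 2 (Fin n → ℝ)) '' s) := by
    conv_lhs => rw [← himg]
    exact hlip.hausdorffMeasure_image_le (Nat.cast_nonneg n) _
  have h2 : (μH[(n : ℝ)] : Measure (Fin n → ℝ)) = volume := by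
    have := hausdorffMeasure_pi_real (ι := Fin n)
    simpa [Fintype.card_fin] using this
  have hemb : MeasurableEmbedding (⇑(WithLp.equiv 2 (Fin n → ℝ)).symm) := by
    have := (MeasurableEquiv.toLp 2 (Fin n → ℝ)).measurableEmbedding
    rwa [MeasurableEquiv.coe_toLp] at this
  have h3 : volume ((WithLp.equiv 2 (Fin n → ℝ)) '' s) = volume s := by
    rw [Equiv.image_eq_preimage_symm]
    exact (PiLp.volume_preserving_toLp (Fin n)).measure_preimage_emb hemb s
  calc μH[(n : ℝ)] s ≤ (K : ℝ≥0∞) ^ (n : ℝ) * μH[(n : ℝ)] ((WithLp.equiv 2 (Fin n → ℝ)) '' s) := h1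
    _ = ((K ^ n : ℝ≥0) : ℝ≥0∞) * volume s := by
        rw [h2, h3, ENNReal.rpow_natCast, ENNReal.coe_pow]
    _ = _ := rfl

/-- The Hausdorff measure of a slice is at most the Hausdorff measure of its projection. -/
lemma aux_slice (n' n'' : ℕ)
    (Z : Set (EuclideanSpace ℝ (Fin n') × EuclideanSpace ℝ (Fin n'')))
    (x'' : EuclideanSpace ℝ (Fin n'')) :
    μH[(n' : ℝ)] {z ∈ Z | z.2 = x''}
      ≤ μH[(n' : ℝ)] {x : EuclideanSpace ℝ (Fin n') | (x, x'') ∈ Z} := by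
  have hiso : Isometry (fun x : EuclideanSpace ℝ (Fin n') => (x, x'')) := by
    intro a b
    simp [Prod.edist_eq]
  have himg : (fun x : EuclideanSpace ℝ (Fin n') => (x, x'')) ''
      {x : EuclideanSpace ℝ (Fin n') | (x, x'') ∈ Z} = {z ∈ Z | z.2 = x''} := by
    ext z
    constructor
    · rintro ⟨x, hx, rfl⟩
      exact ⟨hx, rfl⟩
    · rintro ⟨hz, h2⟩
      exact ⟨z.1, by simpa [← h2] using hz, by simp [← h2]⟩
  rw [← himg, hiso.hausdorffMeasure_image (Or.inl (Nat.cast_nonneg n'))]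

/-- Core geometric inequality: slice volume times projection volume is controlled by 2^n
times the volume of a convex set. -/
lemma aux_core (n' n'' : ℕ)
    (Z : Set (EuclideanSpace ℝ (Fin n') × EuclideanSpace ℝ (Fin n'')))
    (hZ : Convex ℝ Z) (x'' : EuclideanSpace ℝ (Fin n'')) (hx : x'' ∈ Prod.snd '' Z) :
    volume {x : EuclideanSpace ℝ (Fin n') | (x, x'') ∈ Z} * volume (Prod.snd '' Z)
      ≤ 2 ^ (n' + n'') * volume Z := by
  set A : Set (EuclideanSpace ℝ (Fin n')) := {x : EuclideanSpace ℝ (Fin n') | (x, x'') ∈ Z}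
    with hAdef
  set P : Set (EuclideanSpace ℝ (Fin n'')) := Prod.snd '' Z with hPdef
  set T : Set (EuclideanSpace ℝ (Fin n') × EuclideanSpace ℝ (Fin n'')) := toMeasurable volume Z
    with hTdef
  have hT : MeasurableSet T := measurableSet_toMeasurable _ _
  have hZT : Z ⊆ T := subset_toMeasurable _ _
  have hvolT : volume T = volume Z := measure_toMeasurable _
  have hPconv : Convex ℝ P := by
    simpa using hZ.linear_image
      (LinearMap.snd ℝ (EuclideanSpace ℝ (Fin n')) (EuclideanSpace ℝ (Fin n'')))
  set S : Set (EuclideanSpace ℝ (Fin n'')) := ((2⁻¹ : ℝ) • x'') +ᵥ ((2⁻¹ : ℝ) • P) with hSdef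
  have hSconv : Convex ℝ S := (hPconv.smul _).vadd _
  have hSnm : NullMeasurableSet S volume := hSconv.nullMeasurableSet _
  have hhalf : ∀ n : ℕ, ENNReal.ofReal ((2⁻¹ : ℝ) ^ n) = (2⁻¹ : ℝ≥0∞) ^ n := by
    intro n
    rw [ENNReal.ofReal_pow (by norm_num)]
    congr 1
    rw [ENNReal.ofReal_inv_of_pos (by norm_num)]
    norm_num
  -- measure of S
  have hSmeasure : volume S = (2⁻¹ : ℝ≥0∞) ^ n'' * volume P := by
    rw [hSdef, measure_vadd, Measure.addHaar_smul_of_nonneg volume (by norm_num) P,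
      finrank_euclideanSpace_fin, ← hhalf n'']
  -- pointwise lower bound on slices of T over S
  have key : ∀ y ∈ S, (2⁻¹ : ℝ≥0∞) ^ n' * volume A ≤ volume ((fun x => (x, y)) ⁻¹' T) := by
    rintro y ⟨u, ⟨b, hbP, rfl⟩, rfl⟩
    obtain ⟨z, hzZ, rfl⟩ := hbP
    have hsub : ((2⁻¹ : ℝ) • z.1) +ᵥ ((2⁻¹ : ℝ) • A) ⊆
        (fun x => (x, (2⁻¹ : ℝ) • x'' +ᵥ (2⁻¹ : ℝ) • z.2)) ⁻¹' T := by
      rintro w ⟨v, ⟨x₀, hx₀, rfl⟩, rfl⟩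
      apply hZT
      have hmem : (2⁻¹ : ℝ) • ((x₀, x'') : EuclideanSpace ℝ (Fin n') × EuclideanSpace ℝ (Fin n''))
          + (2⁻¹ : ℝ) • z ∈ Z :=
        hZ hx₀ hzZ (by norm_num) (by norm_num) (by norm_num)
      convert hmem using 1
      apply Prod.ext
      · show (2⁻¹ : ℝ) • z.1 + (2⁻¹ : ℝ) • x₀ = ((2⁻¹ : ℝ) • (x₀, x'') + (2⁻¹ : ℝ) • z).1
        simp [add_comm]
      · show (2⁻¹ : ℝ) • x'' + (2⁻¹ : ℝ) • z.2 = ((2⁻¹ : ℝ) • (x₀, x'') + (2⁻¹ : ℝ) • z).2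
        simp
    calc (2⁻¹ : ℝ≥0∞) ^ n' * volume A
        = volume (((2⁻¹ : ℝ) • z.1) +ᵥ ((2⁻¹ : ℝ) • A)) := by
          rw [measure_vadd, Measure.addHaar_smul_of_nonneg volume (by norm_num) A,
            finrank_euclideanSpace_fin, ← hhalf n']
      _ ≤ volume ((fun x => (x, (2⁻¹ : ℝ) • x'' +ᵥ (2⁻¹ : ℝ) • z.2)) ⁻¹' T) :=
          measure_mono hsub
  -- Fubini
  have fub : volume Z = ∫⁻ y, volume ((fun x => (x, y)) ⁻¹' T) ∂volume := by
    rw [← hvolT, Measure.volume_eq_prod, Measure.prod_apply_symm hT]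
  -- integral lower bound
  have hint : (2⁻¹ : ℝ≥0∞) ^ n' * volume A * volume S
      ≤ ∫⁻ y, volume ((fun x => (x, y)) ⁻¹' T) ∂volume := by
    have h1 : ∫⁻ y, S.indicator (fun _ => (2⁻¹ : ℝ≥0∞) ^ n' * volume A) y ∂volume
        ≤ ∫⁻ y, volume ((fun x => (x, y)) ⁻¹' T) ∂volume := by
      apply lintegral_mono
      intro y
      by_cases hy : y ∈ S
      · simpa [Set.indicator_of_mem hy] using key y hy
      · simp [Set.indicator_of_notMem hy]
    calc (2⁻¹ : ℝ≥0∞) ^ n' * volume A * volume S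
        = ∫⁻ y, S.indicator (fun _ => (2⁻¹ : ℝ≥0∞) ^ n' * volume A) y ∂volume := by
          rw [lintegral_indicator₀ hSnm, setLIntegral_const]
      _ ≤ _ := h1
  have main : (2⁻¹ : ℝ≥0∞) ^ n' * volume A * ((2⁻¹ : ℝ≥0∞) ^ n'' * volume P) ≤ volume Z := by
    calc (2⁻¹ : ℝ≥0∞) ^ n' * volume A * ((2⁻¹ : ℝ≥0∞) ^ n'' * volume P)
        = (2⁻¹ : ℝ≥0∞) ^ n' * volume A * volume S := by rw [hSmeasure]
      _ ≤ ∫⁻ y, volume ((fun x => (x, y)) ⁻¹' T) ∂volume := hint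
      _ = volume Z := fub.symm
  have hcancel : (2 : ℝ≥0∞) ^ (n' + n'') * ((2⁻¹ : ℝ≥0∞) ^ n' * (2⁻¹ : ℝ≥0∞) ^ n'') = 1 := by
    rw [pow_add, ← ENNReal.inv_pow, ← ENNReal.inv_pow, mul_mul_mul_comm,
      ENNReal.mul_inv_cancel (pow_ne_zero _ two_ne_zero) (ENNReal.pow_ne_top ENNReal.ofNat_ne_top),
      ENNReal.mul_inv_cancel (pow_ne_zero _ two_ne_zero) (ENNReal.pow_ne_top ENNReal.ofNat_ne_top),
      one_mul]
  calc volume A * volume P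
      = (2 : ℝ≥0∞) ^ (n' + n'') * ((2⁻¹ : ℝ≥0∞) ^ n' * (2⁻¹ : ℝ≥0∞) ^ n'')
        * (volume A * volume P) := by rw [hcancel, one_mul]
    _ = (2 : ℝ≥0∞) ^ (n' + n'')
        * ((2⁻¹ : ℝ≥0∞) ^ n' * volume A * ((2⁻¹ : ℝ≥0∞) ^ n'' * volume P)) := by ring
    _ ≤ (2 : ℝ≥0∞) ^ (n' + n'') * volume Z := mul_le_mul_right main _

/-- Volume of a convex set controls (slice) × (orthogonal projection). -/
theorem stmt_2 (n' n'' : ℕ) :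
    ∃ C : ℝ, 0 < C ∧
    ∀ Z : Set (EuclideanSpace ℝ (Fin n') × EuclideanSpace ℝ (Fin n'')),
      Convex ℝ Z →
      ∀ x'' ∈ Prod.snd '' Z,
        μH[(n' : ℝ)] {z ∈ Z | z.2 = x''} * μH[(n'' : ℝ)] (Prod.snd '' Z)
          ≤ ENNReal.ofReal C * volume Z := by
  obtain ⟨c1, hc1⟩ := aux_haus_le_vol n'
  obtain ⟨c2, hc2⟩ := aux_haus_le_vol n''
  refine ⟨((c1 * c2 * 2 ^ (n' + n'') : ℝ≥0) : ℝ) + 1, by positivity, ?_⟩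
  intro Z hZ x'' hx
  have hA := hc1 {x : EuclideanSpace ℝ (Fin n') | (x, x'') ∈ Z}
  have hP := hc2 (Prod.snd '' Z)
  have hslice := aux_slice n' n'' Z x''
  have hcore := aux_core n' n'' Z hZ x'' hx
  have hC : ((c1 * c2 * 2 ^ (n' + n'') : ℝ≥0) : ℝ≥0∞)
      ≤ ENNReal.ofReal (((c1 * c2 * 2 ^ (n' + n'') : ℝ≥0) : ℝ) + 1) := by
    rw [← ENNReal.ofReal_coe_nnreal]
    exact ENNReal.ofReal_le_ofReal (by linarith)
  calc μH[(n' : ℝ)] {z ∈ Z | z.2 = x''} * μH[(n'' : ℝ)] (Prod.snd '' Z)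
      ≤ ((c1 : ℝ≥0∞) * volume {x : EuclideanSpace ℝ (Fin n') | (x, x'') ∈ Z})
        * ((c2 : ℝ≥0∞) * volume (Prod.snd '' Z)) :=
        mul_le_mul' (hslice.trans hA) hP
    _ = ((c1 : ℝ≥0∞) * c2) * (volume {x : EuclideanSpace ℝ (Fin n') | (x, x'') ∈ Z}
        * volume (Prod.snd '' Z)) := by ring
    _ ≤ ((c1 : ℝ≥0∞) * c2) * (2 ^ (n' + n'') * volume Z) := mul_le_mul_right hcore _
    _ = ((c1 * c2 * 2 ^ (n' + n'') : ℝ≥0) : ℝ≥0∞) * volume Z := by push_cast; ring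
    _ ≤ ENNReal.ofReal (((c1 * c2 * 2 ^ (n' + n'') : ℝ≥0) : ℝ) + 1) * volume Z :=
        mul_le_mul_left hC _
end

section
/- For every compact convex set $S \subset \mathbf{R}^n$ with nonempty interior, there exists an invertible affine transformation $L : \mathbf{R}^n \to \mathbf{R}^n$ such that $\overline{B_1} \subset L^{-1}(S) \subset \overline{B_n}$, where $B_r$ is the ball of radius $r$ centered at the origin. -/
set_option maxHeartbeats 1600000
set_option synthInstance.maxHeartbeats 400000

open Metric RealInnerProductSpace

lemma quad_max' {P Q R l u t : ℝ} (hP : 0 ≤ P) (hl : l ≤ t) (hu : t ≤ u)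
    (h1 : P*l^2+Q*l+R ≤ 0) (h2 : P*u^2+Q*u+R ≤ 0) : P*t^2+Q*t+R ≤ 0 := by
  rcases eq_or_lt_of_le (hl.trans hu) with h | h
  · have h1' : l = t := le_antisymm hl (h ▸ hu)
    subst h1'; exact h1
  · nlinarith [mul_nonneg (sub_nonneg.2 hu) (by linarith : 0 ≤ -(P*l^2+Q*l+R)),
      mul_nonneg (sub_nonneg.2 hl) (by linarith : 0 ≤ -(P*u^2+Q*u+R)),
      mul_nonneg (mul_nonneg (mul_nonneg hP (sub_nonneg.2 hu)) (sub_nonneg.2 hl)) (sub_pos.2 h).le, sub_pos.2 h]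

lemma cap_bound (n : ℕ) (hn : 1 ≤ n) (β : ℝ) (hβ0 : 0 ≤ β) (hβ : (n:ℝ) * β < 1) :
    ∃ a p : ℝ, 0 < a ∧ a < 1 ∧ 0 < p ∧ p ≤ 1 ∧
      (∀ t : ℝ, -1 ≤ t → t ≤ β → ((t + (1-a))/a)^2 + (1 - t^2) * p ≤ 1) ∧
      a^2 < p^(n-1) := by
  have hn1 : (1:ℝ) ≤ n := by exact_mod_cast hn
  have hβn : β ≤ (n:ℝ)*β := by nlinarith
  have hβ1 : β < 1 := by linarith
  obtain ⟨ε, hεq, hεpos⟩ : ∃ ε:ℝ, ε*(4*n+1) = 1 - n*β ∧ 0 < ε :=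
    ⟨(1-n*β)/(4*n+1), div_mul_cancel₀ _ (by positivity), div_pos (by linarith) (by positivity)⟩
  have hε5 : 5*ε ≤ 1-β := by nlinarith
  have hε15 : ε ≤ 1/5 := by nlinarith
  obtain ⟨D, hDq, hD0⟩ : ∃ D:ℝ, D*(1-β) = 2*β+4*ε ∧ 0 ≤ D :=
    ⟨(2*β+4*ε)/(1-β), div_mul_cancel₀ _ (by linarith), div_nonneg (by positivity) (by linarith)⟩
  have hDε : D*ε ≤ 14/25 := by nlinarith [mul_nonneg hD0 hεpos.le, sq_nonneg (1-β), sq_nonneg ε]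
  have ha : (0:ℝ) < 1-ε := by linarith
  refine ⟨1-ε, 1-D*ε, ha, by linarith, by linarith, by nlinarith [mul_nonneg hD0 hεpos.le], ?_, ?_⟩
  · intro t ht1 ht2
    have key : (1-(1-D*ε)*(1-ε)^2)*t^2 + (2*ε)*t + (ε^2 + (1-D*ε)*(1-ε)^2 - (1-ε)^2) ≤ 0 := by
      apply quad_max' _ ht1 ht2
      · nlinarith [mul_nonneg hD0 hεpos.le]
      · have eq1 : (1-(1-D*ε)*(1-ε)^2)*β^2 + (2*ε)*β + (ε^2 + (1-D*ε)*(1-ε)^2 - (1-ε)^2)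
            = -((1+β)*((1-β-2*ε)*(3*ε^2-2*ε^3))) := by
          linear_combination (-ε*(1+β)*(1-ε)^2) * hDq
        rw [eq1]
        have hA : 0 ≤ 1-β-2*ε := by linarith
        have hB : 0 ≤ 3*ε^2 - 2*ε^3 := by nlinarith
        have := mul_nonneg (mul_nonneg (by linarith : (0:ℝ) ≤ 1+β) hA) hB
        nlinarith [this]
      · nlinarith [mul_nonneg hD0 hεpos.le]
    have expand : ((t + (1-(1-ε)))/(1-ε))^2 + (1-t^2)*(1-D*ε) - 1
        = ((1-(1-D*ε)*(1-ε)^2)*t^2 + (2*ε)*t + (ε^2 + (1-D*ε)*(1-ε)^2 - (1-ε)^2))/(1-ε)^2 := by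
      field_simp
      ring
    have h2 := div_nonpos_of_nonpos_of_nonneg key (sq_nonneg (1-ε))
    linarith [expand ▸ h2]
  · have hber : 1 + ((n-1:ℕ):ℝ)*(-(D*ε)) ≤ (1 + -(D*ε))^(n-1) :=
      one_add_mul_le_pow (by linarith [mul_nonneg hD0 hεpos.le]) (n-1)
    have hc : ((n-1:ℕ):ℝ) = (n:ℝ)-1 := by push_cast [Nat.cast_sub hn]; ring
    have hber' : 1 - ((n:ℝ)-1)*(D*ε) ≤ (1-D*ε)^(n-1) := by
      have he : (1-D*ε)^(n-1) = (1 + -(D*ε))^(n-1) := by ring_nf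
      rw [he]; rw [hc] at hber; linarith
    have hkey : ((n:ℝ)-1)*(D*ε) < 2*ε - ε^2 := by
      have h1 : ((n:ℝ)-1)*D*ε*(1-β) = ((n:ℝ)-1)*ε*(2*β+4*ε) := by
        linear_combination (((n:ℝ)-1)*ε) * hDq
      have h2 : ε*(ε*(4*n+1)) = ε*(1-n*β) := by rw [hεq]
      nlinarith [h1, h2, mul_pos hεpos hεpos,
        mul_nonneg (mul_nonneg hβ0 hεpos.le) hεpos.le,
        (by linarith : (0:ℝ) < 1-β)]
    have hsq : ((1:ℝ)-ε)^2 = 1-2*ε+ε^2 := by ring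
    linarith [hber', hkey, hsq.le, hsq.ge]

lemma exists_better (n : ℕ) (hn : 1 ≤ n) (e : EuclideanSpace ℝ (Fin n)) (he : ‖e‖ = 1)
    (β a p : ℝ) (ha0 : 0 < a) (ha1 : a < 1) (hp0 : 0 < p) (hp1 : p ≤ 1)
    (hquad : ∀ t : ℝ, -1 ≤ t → t ≤ β → ((t + (1-a))/a)^2 + (1 - t^2) * p ≤ 1)
    (hdet : a^2 < p^(n-1)) :
    ∃ (A : EuclideanSpace ℝ (Fin n) →L[ℝ] EuclideanSpace ℝ (Fin n))
      (w : EuclideanSpace ℝ (Fin n)),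
      1 < |LinearMap.det (A : EuclideanSpace ℝ (Fin n) →ₗ[ℝ] EuclideanSpace ℝ (Fin n))| ∧
      ∀ y, ‖y‖ ≤ 1 → ⟪e, y⟫ ≤ β → ‖A y + w‖ ≤ 1 := by
  classical
  haveI : NeZero n := ⟨by omega⟩
  have hee : ⟪e, e⟫ = 1 := by
    rw [real_inner_self_eq_norm_sq, he]; norm_num
  set s : ℝ := Real.sqrt p with hs
  have hs0 : 0 < s := Real.sqrt_pos.2 hp0
  have hs2 : s^2 = p := Real.sq_sqrt hp0.le
  set A : EuclideanSpace ℝ (Fin n) →L[ℝ] EuclideanSpace ℝ (Fin n) :=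
      s • (ContinuousLinearMap.id ℝ (EuclideanSpace ℝ (Fin n)))
      + (a⁻¹ - s) • ((innerSL ℝ e).smulRight e) with hA
  have hAapp : ∀ y : EuclideanSpace ℝ (Fin n),
      A y = (a⁻¹ * ⟪e,y⟫) • e + s • (y - ⟪e,y⟫ • e) := by
    intro y
    simp only [hA, ContinuousLinearMap.add_apply, ContinuousLinearMap.smul_apply,
      ContinuousLinearMap.id_apply, ContinuousLinearMap.smulRight_apply, innerSL_apply_apply]
    rw [smul_sub, sub_smul, smul_smul, mul_comm]
    module
  -- determinant
  have hdetA : LinearMap.det (A : EuclideanSpace ℝ (Fin n) →ₗ[ℝ] EuclideanSpace ℝ (Fin n))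
      = a⁻¹ * s^(n-1) := by
    have hortho : Orthonormal ℝ
        (({(0 : Fin n)} : Set (Fin n)).restrict (fun _ => e)) := by
      constructor
      · intro i; exact he
      · rintro ⟨i, hi⟩ ⟨j, hj⟩ hij
        simp only [Set.mem_singleton_iff] at hi hj
        exact absurd (Subtype.ext (hi.trans hj.symm)) hij
    obtain ⟨b, hb⟩ := hortho.exists_orthonormalBasis_extension_of_card_eq (by simp)
    have hb0 : b 0 = e := hb 0 rfl
    rw [← LinearMap.det_toMatrix b.toBasis]
    have hmat : LinearMap.toMatrix b.toBasis b.toBasis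
          (A : EuclideanSpace ℝ (Fin n) →ₗ[ℝ] EuclideanSpace ℝ (Fin n))
        = Matrix.diagonal (fun i => if i = 0 then a⁻¹ else s) := by
      ext i j
      rw [LinearMap.toMatrix_apply]
      have hAbj : A (b.toBasis j) = (if j = 0 then a⁻¹ else s) • (b.toBasis j) := by
        rw [OrthonormalBasis.coe_toBasis]
        rcases eq_or_ne j 0 with hj | hj
        · subst hj
          rw [hAapp, hb0, hee, if_pos rfl]
          simp
        · have h0 : ⟪e, b j⟫ = 0 := by
            rw [← hb0]; exact b.orthonormal.2 (Ne.symm hj)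
          rw [hAapp, h0, if_neg hj]
          simp
      rw [ContinuousLinearMap.coe_coe, hAbj, map_smul, Module.Basis.repr_self]
      rw [Matrix.diagonal_apply]
      simp only [Finsupp.smul_single, smul_eq_mul, mul_one, Finsupp.single_apply]
      rcases eq_or_ne i j with h | h
      · subst h; simp
      · simp [h, Ne.symm h]
    rw [hmat, Matrix.det_diagonal]
    rw [← Finset.mul_prod_erase _ _ (Finset.mem_univ (0 : Fin n))]
    rw [if_pos rfl]
    congr 1
    rw [Finset.prod_congr rfl (fun x hx => if_neg (Finset.ne_of_mem_erase hx)),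
      Finset.prod_const, Finset.card_erase_of_mem (Finset.mem_univ _), Finset.card_univ,
      Fintype.card_fin]
  refine ⟨A, ((1-a)/a) • e, ?_, ?_⟩
  · rw [hdetA]
    have hsn : a < s^(n-1) := by
      have h1 : (s^(n-1))^2 = p^(n-1) := by
        rw [← pow_mul, mul_comm (n-1) 2, pow_mul, hs2]
      have h2 : (0:ℝ) < s^(n-1) := pow_pos hs0 _
      nlinarith
    have : a⁻¹ * a < a⁻¹ * s^(n-1) := by
      exact mul_lt_mul_of_pos_left hsn (inv_pos.2 ha0)
    rw [inv_mul_cancel₀ ha0.ne'] at this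
    rw [abs_of_pos (by positivity)]
    exact this
  · intro y hy hyβ
    set t : ℝ := ⟪e, y⟫ with ht
    have ht1 : -1 ≤ t := by
      have := abs_real_inner_le_norm e y
      rw [he, one_mul] at this
      have := abs_le.1 this
      linarith [this.1]
    have horth : ⟪e, y - t • e⟫ = 0 := by
      rw [inner_sub_right, real_inner_smul_right, hee]
      ring
    have hc : a⁻¹*t + (1-a)/a = (t + (1-a))/a := by
      field_simp
    have hcomb : (a⁻¹ * t) • e + s • (y - t • e) + ((1-a)/a) • e
        = ((t + (1-a))/a) • e + s • (y - t • e) := by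
      rw [← hc]; module
    have hw : ‖y - t•e‖^2 = ‖y‖^2 - t^2 := by
      rw [norm_sub_sq_real, real_inner_smul_right, real_inner_comm, ← ht, norm_smul, he,
        mul_pow, Real.norm_eq_abs, sq_abs]
      ring
    have hnorm2 : ‖A y + ((1-a)/a) • e‖^2
        = ((t + (1-a))/a)^2 + p * (‖y‖^2 - t^2) := by
      rw [hAapp, ← ht, hcomb, norm_add_sq_real, real_inner_smul_left, real_inner_smul_right,
        horth, norm_smul, norm_smul, he, mul_pow, mul_pow, Real.norm_eq_abs, Real.norm_eq_abs, sq_abs, sq_abs, hw, hs2]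
      ring
    have hy2 : ‖y‖^2 ≤ 1 := by
      calc ‖y‖^2 ≤ 1^2 := by
            apply pow_le_pow_left₀ (norm_nonneg y) hy
        _ = 1 := one_pow 2
    have hq := hquad t ht1 hyβ
    nlinarith [norm_nonneg (A y + ((1-a)/a) • e), hnorm2, hq,
      mul_le_mul_of_nonneg_left (by linarith : ‖y‖^2 - t^2 ≤ 1 - t^2) hp0.le]

/-- John's lemma. -/
theorem stmt_3 (n : ℕ) (S : Set (EuclideanSpace ℝ (Fin n)))
    (hS : IsCompact S) (hconv : Convex ℝ S) (hint : (interior S).Nonempty) :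
    ∃ L : EuclideanSpace ℝ (Fin n) ≃ᵃ[ℝ] EuclideanSpace ℝ (Fin n),
      Metric.closedBall 0 1 ⊆ ⇑L ⁻¹' S ∧ ⇑L ⁻¹' S ⊆ Metric.closedBall 0 n := by
  classical
  rcases Nat.eq_zero_or_pos n with hn0 | hn
  · -- trivial case n = 0
    subst hn0
    haveI : Subsingleton (EuclideanSpace ℝ (Fin 0)) := by
      infer_instance
    obtain ⟨z, hz⟩ := hint
    have hzS : z ∈ S := interior_subset hz
    refine ⟨AffineEquiv.refl ℝ _, ?_, ?_⟩
    · intro x _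
      simpa [Subsingleton.elim x z] using hzS
    · intro x _
      simp [mem_closedBall, Subsingleton.elim x (0 : EuclideanSpace ℝ (Fin 0))]
  -- main case
  obtain ⟨x₀, hx₀⟩ := hint
  obtain ⟨ρ, hρ0, hρ⟩ := Metric.isOpen_iff.1 isOpen_interior x₀ hx₀
  have hball : ball x₀ ρ ⊆ S := hρ.trans interior_subset
  obtain ⟨R, hR⟩ := (Metric.isBounded_iff_subset_closedBall 0).1 hS.isBounded
  -- the feasible set
  set K : Set ((EuclideanSpace ℝ (Fin n) →L[ℝ] EuclideanSpace ℝ (Fin n)) × EuclideanSpace ℝ (Fin n)) := {q | ∀ x ∈ S, ‖q.1 x + q.2‖ ≤ 1} with hK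
  have hKclosed : IsClosed K := by
    have : K = ⋂ x ∈ S, {q : (EuclideanSpace ℝ (Fin n) →L[ℝ] EuclideanSpace ℝ (Fin n)) × EuclideanSpace ℝ (Fin n) | ‖q.1 x + q.2‖ ≤ 1} := by
      ext q; simp [hK]
    rw [this]
    refine isClosed_biInter fun x _ => ?_
    have hc : Continuous fun q : (EuclideanSpace ℝ (Fin n) →L[ℝ] EuclideanSpace ℝ (Fin n)) × EuclideanSpace ℝ (Fin n) => ‖q.1 x + q.2‖ :=
      (((ContinuousLinearMap.apply ℝ (EuclideanSpace ℝ (Fin n)) x).continuous.comp continuous_fst).add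
        continuous_snd).norm
    exact isClosed_le hc continuous_const
  have hKbdd : Bornology.IsBounded K := by
    have hsub : K ⊆ (closedBall 0 (4/ρ)) ×ˢ (closedBall 0 (1 + (4/ρ) * ‖x₀‖)) := by
      rintro ⟨A, v⟩ hq
      have hA4 : ‖A‖ ≤ 4/ρ := by
        apply ContinuousLinearMap.opNorm_le_bound _ (by positivity)
        intro x
        rcases eq_or_ne x 0 with rfl | hx
        · simp
        · have hxn : (0:ℝ) < ‖x‖ := norm_pos_iff.2 hx
          set c : ℝ := (ρ/2)/‖x‖ with hc
          have hc0 : 0 < c := by positivity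
          have hcx : ‖c • x‖ = ρ/2 := by
            rw [norm_smul, Real.norm_eq_abs, abs_of_pos hc0, hc]
            field_simp
          have h1 : ‖A (c • x)‖ ≤ 2 := by
            have m1 : x₀ + c • x ∈ S := hball (by
              simp [mem_ball, dist_self_add_left, hcx]; linarith)
            have m2 : x₀ ∈ S := hball (by simp [mem_ball, hρ0])
            have b1 := hq (x₀ + c • x) m1
            have b2 := hq x₀ m2
            have : A (x₀ + c • x) + v - (A x₀ + v) = A (c • x) := by
              rw [map_add]; abel
            calc ‖A (c • x)‖ = ‖(A (x₀ + c • x) + v) - (A x₀ + v)‖ := by rw [this]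
              _ ≤ ‖A (x₀ + c • x) + v‖ + ‖A x₀ + v‖ := norm_sub_le _ _
              _ ≤ 1 + 1 := add_le_add b1 b2
              _ = 2 := by norm_num
          have h2 : ‖A (c • x)‖ = c * ‖A x‖ := by
            rw [map_smul, norm_smul, Real.norm_eq_abs, abs_of_pos hc0]
          rw [h2] at h1
          rw [hc] at h1
          calc ‖A x‖ = (ρ/2/‖x‖ * ‖A x‖) * (2/ρ) * ‖x‖ := by field_simp
            _ ≤ 2 * (2/ρ) * ‖x‖ := by
                apply mul_le_mul_of_nonneg_right _ (norm_nonneg x)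
                apply mul_le_mul_of_nonneg_right h1 (by positivity)
            _ = 4/ρ * ‖x‖ := by ring
      constructor
      · exact mem_closedBall_zero_iff.2 hA4
      · have m2 : x₀ ∈ S := hball (by simp [mem_ball, hρ0])
        have b2 := hq x₀ m2
        have hvb : ‖v‖ ≤ ‖A x₀ + v‖ + ‖A x₀‖ := by
          calc ‖v‖ = ‖(A x₀ + v) - A x₀‖ := by rw [add_sub_cancel_left]
            _ ≤ ‖A x₀ + v‖ + ‖A x₀‖ := norm_sub_le _ _
        have hAx₀ : ‖A x₀‖ ≤ (4/ρ) * ‖x₀‖ := le_trans (A.le_opNorm x₀)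
          (mul_le_mul_of_nonneg_right hA4 (norm_nonneg _))
        rw [mem_closedBall_zero_iff]
        linarith
    exact (Metric.isBounded_closedBall.prod Metric.isBounded_closedBall).subset hsub
  have hKcompact : IsCompact K := Metric.isCompact_of_isClosed_isBounded hKclosed hKbdd
  -- feasible point with positive determinant
  have hRpos : (0:ℝ) < max R 1 := lt_max_of_lt_right one_pos
  set q₁ : (EuclideanSpace ℝ (Fin n) →L[ℝ] EuclideanSpace ℝ (Fin n)) × EuclideanSpace ℝ (Fin n) := ((max R 1)⁻¹ • ContinuousLinearMap.id ℝ (EuclideanSpace ℝ (Fin n)), 0) with hq₁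
  have hq₁K : q₁ ∈ K := by
    intro x hx
    have : ‖x‖ ≤ max R 1 := le_trans (mem_closedBall_zero_iff.1 (hR hx)) (le_max_left _ _)
    simp only [hq₁, ContinuousLinearMap.smul_apply, ContinuousLinearMap.id_apply, add_zero]
    rw [norm_smul, Real.norm_eq_abs, abs_of_pos (inv_pos.2 hRpos)]
    rw [inv_mul_le_iff₀ hRpos]
    simpa using this
  have hq₁det : 0 < |LinearMap.det (q₁.1 : EuclideanSpace ℝ (Fin n) →ₗ[ℝ] EuclideanSpace ℝ (Fin n))| := by
    have : LinearMap.det (q₁.1 : EuclideanSpace ℝ (Fin n) →ₗ[ℝ] EuclideanSpace ℝ (Fin n)) = ((max R 1)⁻¹)^n := by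
      simp only [hq₁]
      rw [ContinuousLinearMap.coe_smul, ContinuousLinearMap.coe_id]
      rw [LinearMap.det_smul, LinearMap.det_id, mul_one, finrank_euclideanSpace_fin]
    rw [this]
    positivity
  -- maximize determinant
  obtain ⟨⟨A₀, v₀⟩, hmem, hmax⟩ := hKcompact.exists_isMaxOn ⟨q₁, hq₁K⟩
    (Continuous.continuousOn (by
      have : Continuous fun q : (EuclideanSpace ℝ (Fin n) →L[ℝ] EuclideanSpace ℝ (Fin n)) × EuclideanSpace ℝ (Fin n) => |LinearMap.det (q.1 : EuclideanSpace ℝ (Fin n) →ₗ[ℝ] EuclideanSpace ℝ (Fin n))| :=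
        (ContinuousLinearMap.continuous_det.comp continuous_fst).abs
      exact this))
  have hdet₀ : 0 < |LinearMap.det (A₀ : EuclideanSpace ℝ (Fin n) →ₗ[ℝ] EuclideanSpace ℝ (Fin n))| :=
    lt_of_lt_of_le hq₁det (hmax hq₁K)
  have hmemS : ∀ x ∈ S, ‖A₀ x + v₀‖ ≤ 1 := hmem
  have hdetne : A₀.det ≠ 0 := fun h => by
    rw [ContinuousLinearMap.det] at h
    rw [h] at hdet₀; simp at hdet₀
  set A₀e := A₀.toContinuousLinearEquivOfDetNeZero hdetne with hA₀e
  set M₀ : EuclideanSpace ℝ (Fin n) ≃ᵃ[ℝ] EuclideanSpace ℝ (Fin n) :=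
    (A₀e.toLinearEquiv.toAffineEquiv).trans
      (AffineEquiv.constVAdd ℝ (EuclideanSpace ℝ (Fin n)) v₀) with hM₀def
  have hM₀ : ∀ x, M₀ x = A₀ x + v₀ := by
    intro x
    simp only [hM₀def, AffineEquiv.trans_apply, AffineEquiv.constVAdd_apply,
      LinearEquiv.coe_toAffineEquiv, vadd_eq_add]
    rw [add_comm]
    try congr 1
    try exact congrFun (congrArg _ (A₀.coe_toContinuousLinearEquivOfDetNeZero hdetne)) x
  set T : Set (EuclideanSpace ℝ (Fin n)) := ⇑M₀ '' S with hTdef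
  have hT1 : ∀ y ∈ T, ‖y‖ ≤ 1 := by
    rintro y ⟨x, hx, rfl⟩
    rw [hM₀]; exact hmemS x hx
  have hTconv : Convex ℝ T := by
    have := hconv.affine_image M₀.toAffineMap
    simpa [hTdef] using this
  have hTcompact : IsCompact T :=
    hS.image M₀.toAffineMap.continuous_of_finiteDimensional
  have hTne : T.Nonempty := ⟨M₀ x₀, ⟨x₀, interior_subset hx₀, rfl⟩⟩
  have hn' : (1:ℝ) ≤ (n:ℝ) := by exact_mod_cast hn
  have hclaim : ∀ z : EuclideanSpace ℝ (Fin n), ‖z‖ ≤ 1/(n:ℝ) → z ∈ T := by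
    intro z hz
    by_contra hzT
    obtain ⟨f, u, hfu, huz⟩ :=
      geometric_hahn_banach_closed_point hTconv hTcompact.isClosed hzT
    set w := (InnerProductSpace.toDual ℝ (EuclideanSpace ℝ (Fin n))).symm f with hwdef
    have hwy : ∀ y, ⟪w, y⟫ = f y := fun y => InnerProductSpace.toDual_symm_apply
    have hw0 : w ≠ 0 := by
      rintro hww
      obtain ⟨y₀, hy₀⟩ := hTne
      have h1 := hfu y₀ hy₀
      rw [← hwy] at h1
      rw [← hwy] at huz
      rw [hww] at h1 huz
      simp only [inner_zero_left] at h1 huz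
      linarith
    have hwn : 0 < ‖w‖ := norm_pos_iff.2 hw0
    set e : EuclideanSpace ℝ (Fin n) := ‖w‖⁻¹ • w with hedef
    have he : ‖e‖ = 1 := by
      rw [hedef, norm_smul, Real.norm_eq_abs, abs_of_pos (inv_pos.2 hwn),
        inv_mul_cancel₀ hwn.ne']
    set β : ℝ := u / ‖w‖ with hβdef
    have hey : ∀ y ∈ T, ⟪e, y⟫ ≤ β := by
      intro y hy
      rw [hedef, real_inner_smul_left, hwy, hβdef, div_eq_inv_mul]
      exact mul_le_mul_of_nonneg_left (hfu y hy).le (inv_pos.2 hwn).le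
    have hez : β < ⟪e, z⟫ := by
      rw [hedef, real_inner_smul_left, hwy, hβdef, div_eq_inv_mul]
      exact mul_lt_mul_of_pos_left huz (inv_pos.2 hwn)
    have hzn : ⟪e, z⟫ ≤ 1/(n:ℝ) := by
      calc ⟪e, z⟫ ≤ ‖e‖ * ‖z‖ := real_inner_le_norm e z
        _ = ‖z‖ := by rw [he, one_mul]
        _ ≤ 1/(n:ℝ) := hz
    have hβn : β < 1/(n:ℝ) := lt_of_lt_of_le hez hzn
    set β' : ℝ := max β 0 with hβ'def
    have hβ'0 : 0 ≤ β' := le_max_right _ _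
    have hnpos : (0:ℝ) < n := by linarith
    have hβ'n : (n:ℝ) * β' < 1 := by
      rcases max_cases β 0 with ⟨hc, _⟩ | ⟨hc, _⟩ <;> rw [hβ'def, hc]
      · rw [mul_comm, ← lt_div_iff₀ hnpos]
        calc β < 1/(n:ℝ) := hβn
          _ = (1:ℝ)/n := by ring
      · simpa using one_pos
    obtain ⟨a, p, ha0, ha1, hp0, hp1, hquad, hdet⟩ := cap_bound n hn β' hβ'0 hβ'n
    obtain ⟨A, w', hAdet, hAprop⟩ :=
      exists_better n hn e he β' a p ha0 ha1 hp0 hp1 hquad hdet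
    have hfeas : (A.comp A₀, A v₀ + w') ∈ K := by
      intro x hx
      have hy : A₀ x + v₀ ∈ T := ⟨x, hx, hM₀ x⟩
      have h1 : ‖A₀ x + v₀‖ ≤ 1 := hT1 _ hy
      have h2 : ⟪e, A₀ x + v₀⟫ ≤ β' := le_trans (hey _ hy) (le_max_left _ _)
      have h3 := hAprop _ h1 h2
      have h4 : (A.comp A₀) x + (A v₀ + w') = A (A₀ x + v₀) + w' := by
        rw [ContinuousLinearMap.comp_apply, map_add]
        abel
      rw [h4]
      exact h3
    have hle := hmax hfeas
    have hcomp : |LinearMap.det ((A.comp A₀ : EuclideanSpace ℝ (Fin n) →ₗ[ℝ] EuclideanSpace ℝ (Fin n)))|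
        = |LinearMap.det (A : EuclideanSpace ℝ (Fin n) →ₗ[ℝ] EuclideanSpace ℝ (Fin n))|
          * |LinearMap.det (A₀ : EuclideanSpace ℝ (Fin n) →ₗ[ℝ] EuclideanSpace ℝ (Fin n))| := by
      rw [ContinuousLinearMap.toLinearMap_comp, LinearMap.det_comp, abs_mul]
    simp only [IsMaxOn, IsMaxFilter] at hle
    have hle' : |LinearMap.det ((A.comp A₀ : EuclideanSpace ℝ (Fin n) →ₗ[ℝ] EuclideanSpace ℝ (Fin n)))|
        ≤ |LinearMap.det (A₀ : EuclideanSpace ℝ (Fin n) →ₗ[ℝ] EuclideanSpace ℝ (Fin n))| := hmax hfeas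
    rw [hcomp] at hle'
    nlinarith [hdet₀, hAdet, hle']
  -- final construction
  have hnne : ((n:ℝ))⁻¹ ≠ 0 := by positivity
  set σ : EuclideanSpace ℝ (Fin n) ≃ₗ[ℝ] EuclideanSpace ℝ (Fin n) :=
    LinearEquiv.smulOfUnit (Units.mk0 ((n:ℝ))⁻¹ hnne) with hσdef
  set L : EuclideanSpace ℝ (Fin n) ≃ᵃ[ℝ] EuclideanSpace ℝ (Fin n) :=
    σ.toAffineEquiv.trans M₀.symm with hLdef
  have hLapp : ∀ x, L x = M₀.symm (((n:ℝ))⁻¹ • x) := by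
    intro x
    simp only [hLdef, AffineEquiv.trans_apply, LinearEquiv.coe_toAffineEquiv]
    congr 1
  refine ⟨L, ?_, ?_⟩
  · intro x hx
    have hx1 : ‖x‖ ≤ 1 := mem_closedBall_zero_iff.1 hx
    have hsm : ‖((n:ℝ))⁻¹ • x‖ ≤ 1/(n:ℝ) := by
      rw [norm_smul, Real.norm_eq_abs, abs_of_pos (inv_pos.2 (by linarith : (0:ℝ) < n))]
      rw [div_eq_inv_mul]
      exact mul_le_mul_of_nonneg_left hx1 (by positivity)
    obtain ⟨s₀, hs₀, hs₀e⟩ := hclaim _ hsm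
    have : M₀.symm (((n:ℝ))⁻¹ • x) = s₀ := by
      rw [← hs₀e, AffineEquiv.symm_apply_apply]
    rw [Set.mem_preimage, hLapp, this]
    exact hs₀
  · intro x hx
    rw [Set.mem_preimage, hLapp] at hx
    have hmemT : ((n:ℝ))⁻¹ • x ∈ T :=
      ⟨M₀.symm (((n:ℝ))⁻¹ • x), hx, M₀.apply_symm_apply _⟩
    have := hT1 _ hmemT
    rw [norm_smul, Real.norm_eq_abs, abs_of_pos (inv_pos.2 (by linarith : (0:ℝ) < n))] at this
    rw [mem_closedBall_zero_iff]
    calc ‖x‖ = (n:ℝ) * ((n:ℝ)⁻¹ * ‖x‖) := by field_simp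
      _ ≤ (n:ℝ) * 1 := mul_le_mul_of_nonneg_left this (by linarith)
      _ = (n:ℝ) := mul_one _
end
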